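/- For a positive integer m, c > 0 and real x > 0, (m!/(2πi)) ∫_{c-i∞}^{c+i∞} x^{s+m}/(s(s+1)⋯(s+m)) ds equals 0 if 0 < x ≤ 1 and equals (x-1)^m if x ≥ 1. -/

import Mathlib

open scoped BigOperators
open Complex MeasureTheory

open Set Filter

noncomputable def inghamF (m : ℕ) : ℝ → ℂ := fun y => if 1 ≤ y then 0 else ((1:ℂ) - y) ^ m

lemma inghamF_eqOn (m : ℕ) (hm : 1 ≤ m) (s : ℂ) :
    Set.EqOn (fun y : ℝ => (y:ℂ)^(s-1) • inghamF m y)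
      (Set.indicator (Set.Ioc (0:ℝ) 1) (fun y : ℝ => (y:ℂ)^(s-1) * (1-(y:ℂ))^(m:ℂ)))
      (Set.Ioi 0) := by
  intro y hy
  have hy0 : 0 < y := hy
  have hm0 : (m : ℂ) ≠ 0 := Nat.cast_ne_zero.2 (by omega)
  by_cases h : 1 ≤ y
  · rcases h.eq_or_lt with rfl | h'
    · simp [inghamF, Set.indicator, hy0, zero_cpow hm0]
    · simp [inghamF, Set.indicator, h, not_le.2 h']
  · have h1 : y ≤ 1 := (not_le.1 h).le
    simp only [inghamF, if_neg h, smul_eq_mul,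
      Set.indicator_of_mem (Set.mem_Ioc.2 ⟨hy0, h1⟩), cpow_natCast]

lemma inghamF_mellin (m : ℕ) (hm : 1 ≤ m) {s : ℂ} (hs : 0 < s.re) :
    mellin (inghamF m) s
      = (m.factorial : ℂ) / ∏ j ∈ Finset.range (m + 1), (s + j) := by
  have hb := Complex.betaIntegral_eval_nat_add_one_right hs m
  rw [Complex.betaIntegral] at hb
  simp only [add_sub_cancel_right] at hb
  rw [mellin, setIntegral_congr_fun measurableSet_Ioi (inghamF_eqOn m hm s),
    setIntegral_indicator measurableSet_Ioc,
    Set.inter_eq_self_of_subset_right Set.Ioc_subset_Ioi_self,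
    ← intervalIntegral.integral_of_le zero_le_one]
  exact hb

lemma inghamF_conv (m : ℕ) (hm : 1 ≤ m) {s : ℂ} (hs : 0 < s.re) :
    MellinConvergent (inghamF m) s := by
  have hv : (0:ℝ) < ((m:ℂ)+1).re := by simp; positivity
  have hb := (Complex.betaIntegral_convergent hs hv)
  rw [intervalIntegrable_iff_integrableOn_Ioc_of_le zero_le_one] at hb
  simp only [add_sub_cancel_right] at hb
  have hind : Integrable (Set.indicator (Set.Ioc (0:ℝ) 1)
      (fun y : ℝ => (y:ℂ)^(s-1) * (1-(y:ℂ))^(m:ℂ))) :=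
    (integrable_indicator_iff measurableSet_Ioc).2 hb
  exact (hind.integrableOn).congr_fun (inghamF_eqOn m hm s).symm measurableSet_Ioi

lemma inghamF_continuous (m : ℕ) (hm : 1 ≤ m) : Continuous (inghamF m) := by
  have hg : Continuous fun y : ℝ => ((1:ℂ) - (y:ℂ))^m := by fun_prop
  rw [continuous_iff_continuousAt]
  intro y
  rcases lt_trichotomy y 1 with h | rfl | h
  · have hev : ∀ᶠ z in nhds y, inghamF m z = ((1:ℂ) - z)^m := by
      filter_upwards [eventually_lt_nhds h] with z hz
      simp [inghamF, not_le.2 hz]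
    exact hg.continuousAt.congr (Filter.EventuallyEq.symm hev)
  · have h0 : inghamF m 1 = 0 := by simp [inghamF]
    rw [ContinuousAt, h0]
    have hb : ∀ z : ℝ, ‖inghamF m z‖ ≤ |1 - z|^m := by
      intro z
      by_cases hz : 1 ≤ z
      · simp only [inghamF, if_pos hz, norm_zero]
        positivity
      · simp only [inghamF, if_neg hz, norm_pow]
        have : ((1:ℂ) - (z:ℂ)) = ((1 - z : ℝ) : ℂ) := by push_cast; ring
        rw [this, Complex.norm_real, Real.norm_eq_abs]
    have ht : Filter.Tendsto (fun z : ℝ => |1 - z|^m) (nhds 1) (nhds 0) := by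
      have hc : Continuous fun z : ℝ => |1 - z|^m := by fun_prop
      have := hc.tendsto 1
      simpa [zero_pow (by omega : m ≠ 0)] using this
    exact squeeze_zero_norm hb ht
  · have hev : ∀ᶠ z in nhds y, inghamF m z = 0 := by
      filter_upwards [eventually_gt_nhds h] with z hz
      simp [inghamF, hz.le]
    exact continuousAt_const.congr (Filter.EventuallyEq.symm hev)

lemma ingham_prod_ne (m : ℕ) {c : ℝ} (hc : 0 < c) (t : ℝ) :
    (∏ j ∈ Finset.range (m + 1), ((c:ℂ) + t * I + j)) ≠ 0 := by
  rw [Finset.prod_ne_zero_iff]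
  intro j _ h
  have h1 : ((c:ℂ) + t * I + j).re = c + j := by simp
  rw [h] at h1
  simp only [Complex.zero_re] at h1
  have h2 : (0:ℝ) < c + j := by positivity
  linarith

lemma ingham_vert (m : ℕ) (hm : 1 ≤ m) {c : ℝ} (hc : 0 < c) :
    Complex.VerticalIntegrable (mellin (inghamF m)) c := by
  set k : ℝ := min (c^2) 1 / 2 with hk
  have hk0 : 0 < k := by
    have := lt_min (by positivity : (0:ℝ) < c^2) one_pos
    positivity
  set K : ℝ := (m.factorial : ℝ) / (c^(m-1) * k) with hK
  have hF : Integrable (fun t : ℝ =>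
      (m.factorial : ℂ) / ∏ j ∈ Finset.range (m + 1), ((c:ℂ) + t * I + j)) := by
    apply Integrable.mono' ((integrable_inv_one_add_sq).const_mul K)
    · apply Continuous.aestronglyMeasurable
      apply Continuous.div continuous_const
      · apply continuous_finset_prod
        intro j _
        fun_prop
      · exact fun t => ingham_prod_ne m hc t
    · refine Filter.Eventually.of_forall fun t => ?_
      have hfac : ∀ j ∈ Finset.range (m + 1), max c |t| ≤ ‖(c:ℂ) + t * I + j‖ := by
        intro j _
        have hre : ((c:ℂ) + t * I + j).re = c + j := by simp
        have him : ((c:ℂ) + t * I + j).im = t := by simp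
        refine max_le ?_ ?_
        · calc c ≤ c + j := le_add_of_nonneg_right (Nat.cast_nonneg j)
            _ = |((c:ℂ) + t * I + j).re| := by
                rw [hre, abs_of_pos (by positivity)]
            _ ≤ ‖(c:ℂ) + t * I + j‖ := by
                exact Complex.abs_re_le_norm _
        · calc |t| = |((c:ℂ) + t * I + j).im| := by rw [him]
            _ ≤ ‖(c:ℂ) + t * I + j‖ := by
                exact Complex.abs_im_le_norm _
      set M := max c |t| with hM
      have hcM : c ≤ M := le_max_left _ _
      have htM : |t| ≤ M := le_max_right _ _
      have hM0 : 0 < M := lt_of_lt_of_le hc hcM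
      have hPP : (M : ℝ)^(m+1) ≤ ∏ j ∈ Finset.range (m + 1), ‖(c:ℂ) + t * I + j‖ := by
        calc M^(m+1) = ∏ _j ∈ Finset.range (m + 1), M := by
              rw [Finset.prod_const, Finset.card_range]
          _ ≤ _ := Finset.prod_le_prod (fun _ _ => hM0.le) hfac
      have h2 : c^(m-1) * M^2 ≤ M^(m+1) := by
        have : M^(m+1) = M^(m-1) * M^2 := by rw [← pow_add]; congr 1; omega
        rw [this]
        gcongr
      have h3 : k * (1 + t^2) ≤ M^2 := by
        have hmin1 : min (c^2) 1 ≤ c^2 := min_le_left _ _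
        have hmin2 : min (c^2) 1 ≤ 1 := min_le_right _ _
        have hc2 : c^2 ≤ M^2 := by gcongr
        have ht2 : t^2 ≤ M^2 := by
          calc t^2 = |t|^2 := (_root_.sq_abs t).symm
            _ ≤ M^2 := by gcongr
        rw [hk]
        nlinarith [sq_nonneg t]
      have hlow : c^(m-1) * (k * (1 + t^2)) ≤
          ∏ j ∈ Finset.range (m + 1), ‖(c:ℂ) + t * I + j‖ := by
        calc c^(m-1) * (k * (1 + t^2)) ≤ c^(m-1) * M^2 := by
              gcongr
          _ ≤ M^(m+1) := h2
          _ ≤ _ := hPP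
      have hlow0 : 0 < c^(m-1) * (k * (1 + t^2)) := by positivity
      have hnorm : ‖(m.factorial : ℂ) / ∏ j ∈ Finset.range (m + 1), ((c:ℂ) + t * I + j)‖
          = (m.factorial : ℝ) / ∏ j ∈ Finset.range (m + 1), ‖(c:ℂ) + t * I + j‖ := by
        rw [norm_div, norm_prod]
        norm_num
      rw [hnorm]
      calc (m.factorial : ℝ) / ∏ j ∈ Finset.range (m + 1), ‖(c:ℂ) + t * I + j‖
          ≤ (m.factorial : ℝ) / (c^(m-1) * (k * (1 + t^2))) := by
            gcongr
        _ = K * (1 + t^2)⁻¹ := by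
            rw [hK, ← mul_assoc, ← div_div, div_eq_mul_inv]
  exact hF.congr (Filter.Eventually.of_forall fun t =>
    (inghamF_mellin m hm (by simp [hc] : (0:ℝ) < ((c:ℂ) + t * I).re)).symm)


/-- Ingham's Riesz-mean inversion formula: for a positive integer `m`,
`c > 0` and real `x > 0`,
`(m!/(2πi)) ∫_{c-i∞}^{c+i∞} x^{s+m}/(s(s+1)⋯(s+m)) ds` equals `0` if `0 < x ≤ 1`
and `(x-1)^m` if `x ≥ 1`.  The line integral over `Re s = c` is written as the
Lebesgue integral over `t ∈ ℝ` of the integrand at `s = c + it` (the factor `i`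
from `ds = i dt` cancelling one `i` of `2πi`). -/
theorem ingham_riesz_inversion (m : ℕ) (hm : 1 ≤ m) (c : ℝ) (hc : 0 < c)
    (x : ℝ) (hx : 0 < x) :
    ((m.factorial : ℂ) / (2 * Real.pi)) *
      ∫ t : ℝ, (x : ℂ) ^ ((c : ℂ) + t * Complex.I + m) /
        ∏ j ∈ Finset.range (m + 1), ((c : ℂ) + t * Complex.I + j) =
    if x ≤ 1 then 0 else ((x : ℂ) - 1) ^ m := by
  have hx0 : (x : ℂ) ≠ 0 := Complex.ofReal_ne_zero.2 hx.ne'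
  have hfac0 : (m.factorial : ℂ) ≠ 0 := Nat.cast_ne_zero.2 m.factorial_ne_zero
  have hxinv : ∀ s : ℂ, ((1/x : ℝ) : ℂ) ^ (-s) = (x : ℂ) ^ s := by
    intro s
    have harg : (x : ℂ).arg ≠ Real.pi := by
      rw [Complex.arg_ofReal_of_nonneg hx.le]
      exact Real.pi_ne_zero.symm
    rw [one_div, Complex.ofReal_inv, Complex.inv_cpow _ _ harg, Complex.cpow_neg, inv_inv]
  have hmel : ∀ t : ℝ, mellin (inghamF m) ((c:ℂ) + t * I)
      = (m.factorial : ℂ) / ∏ j ∈ Finset.range (m + 1), ((c:ℂ) + t * I + j) :=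
    fun t => inghamF_mellin m hm (by simp [hc])
  have key := mellinInv_mellin_eq c (inghamF m) (x := 1/x) (by positivity)
    (inghamF_conv m hm (by simp [hc])) (ingham_vert m hm hc)
    ((inghamF_continuous m hm).continuousAt)
  rw [mellinInv] at key
  have hinteg : ∀ t : ℝ, (x : ℂ) ^ ((c : ℂ) + t * I + m) /
        ∏ j ∈ Finset.range (m + 1), ((c : ℂ) + t * I + j)
      = ((x:ℂ)^m / (m.factorial : ℂ)) *
        (((1/x : ℝ) : ℂ) ^ (-((c:ℂ) + t * I)) • mellin (inghamF m) ((c:ℂ) + t * I)) := by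
    intro t
    rw [hmel t, hxinv, smul_eq_mul, Complex.cpow_add _ _ hx0, Complex.cpow_natCast]
    field_simp [ingham_prod_ne m hc t]
  calc ((m.factorial : ℂ) / (2 * Real.pi)) *
      ∫ t : ℝ, (x : ℂ) ^ ((c : ℂ) + t * I + m) /
        ∏ j ∈ Finset.range (m + 1), ((c : ℂ) + t * I + j)
      = ((m.factorial : ℂ) / (2 * Real.pi)) * (((x:ℂ)^m / (m.factorial : ℂ)) *
          ∫ t : ℝ, ((1/x : ℝ) : ℂ) ^ (-((c:ℂ) + t * I)) •
            mellin (inghamF m) ((c:ℂ) + t * I)) := by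
        have h : (∫ t : ℝ, (x : ℂ) ^ ((c : ℂ) + t * I + m) /
              ∏ j ∈ Finset.range (m + 1), ((c : ℂ) + t * I + j))
            = ((x:ℂ)^m / (m.factorial : ℂ)) *
              ∫ t : ℝ, ((1/x : ℝ) : ℂ) ^ (-((c:ℂ) + t * I)) •
                mellin (inghamF m) ((c:ℂ) + t * I) := by
          rw [← MeasureTheory.integral_const_mul]
          exact MeasureTheory.integral_congr_ae (Filter.Eventually.of_forall hinteg)
        rw [h]
    _ = (x:ℂ)^m * ((1 / (2 * Real.pi) : ℝ) •
          ∫ t : ℝ, ((1/x : ℝ) : ℂ) ^ (-((c:ℂ) + t * I)) •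
            mellin (inghamF m) ((c:ℂ) + t * I)) := by
        rw [Complex.real_smul]
        push_cast
        have hpi : (Real.pi : ℂ) ≠ 0 := Complex.ofReal_ne_zero.2 Real.pi_ne_zero
        field_simp
        ring
        congr 1
        funext t
        ring_nf
    _ = (x:ℂ)^m * inghamF m (1/x) := by rw [key]
    _ = if x ≤ 1 then 0 else ((x : ℂ) - 1) ^ m := by
        by_cases hx1 : x ≤ 1
        · have h1 : (1:ℝ) ≤ 1/x := one_le_one_div hx hx1
          rw [if_pos hx1]
          have h2 : inghamF m (1/x) = 0 := by
            simp only [inghamF, if_pos h1]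
          rw [h2, mul_zero]
        · push_neg at hx1
          have h1 : ¬ (1:ℝ) ≤ 1/x := by
            rw [not_le]
            exact (div_lt_one hx).2 (by linarith)
          rw [if_neg (not_le.2 hx1)]
          simp only [inghamF, if_neg h1]
          rw [← mul_pow]
          congr 1
          push_cast
          field_simp
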